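/- (Cauchy interlacing.) Let n ≥ 2, let A be an n×n complex Hermitian matrix, and let A′ be the (n−1)×(n−1) Hermitian matrix obtained by deleting the last row and last column of A. Let λ_1(A) ≤ λ_2(A) ≤ ⋯ ≤ λ_n(A) be the eigenvalues of A in increasing order, and λ_1′(A′) ≤ ⋯ ≤ λ_{n−1}′(A′) those of A′. Then for every 1 ≤ j ≤ n−1, λ_j(A) ≤ λ_j′(A′) ≤ λ_{j+1}(A). -/

import Mathlib

open RCLike Submodule Module

noncomputable section CauchyAux

local notation "⟪" x ", " y "⟫" => @inner ℂ _ _ x y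

namespace CauchyAux

variable {n : ℕ} {E : Type*} [NormedAddCommGroup E] [InnerProductSpace ℂ E]

lemma repr_eig (w : OrthonormalBasis (Fin n) ℂ E) (T : E →ₗ[ℂ] E) (μ : Fin n → ℝ)
    (hw : ∀ i, T (w i) = (μ i : ℂ) • w i) (x : E) (i : Fin n) :
    w.repr (T x) i = (μ i : ℂ) * w.repr x i := by
  rw [OrthonormalBasis.repr_apply_apply]
  conv_lhs => rw [← w.sum_repr x]
  rw [map_sum, inner_sum]
  simp only [map_smul, hw, inner_smul_right, orthonormal_iff_ite.mp w.orthonormal]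
  simp only [mul_ite, mul_one, mul_zero, Finset.sum_ite_eq, Finset.mem_univ, if_true]
  rw [OrthonormalBasis.repr_apply_apply]
  ring

lemma inner_T_eq (w : OrthonormalBasis (Fin n) ℂ E) (T : E →ₗ[ℂ] E) (μ : Fin n → ℝ)
    (hw : ∀ i, T (w i) = (μ i : ℂ) • w i) (x : E) :
    re ⟪x, T x⟫ = ∑ i, μ i * ‖w.repr x i‖ ^ 2 := by
  rw [← w.repr.inner_map_map x (T x), PiLp.inner_apply, map_sum]
  congr 1; ext i
  rw [repr_eig w T μ hw x i, RCLike.inner_apply,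
    show (μ i : ℂ) * w.repr x i * (starRingEnd ℂ) (w.repr x i)
      = (μ i : ℂ) * (w.repr x i * (starRingEnd ℂ) (w.repr x i)) by ring,
    RCLike.mul_conj]
  norm_num [← Complex.ofReal_pow]

lemma inner_self_eq' (w : OrthonormalBasis (Fin n) ℂ E) (x : E) :
    re ⟪x, x⟫ = ∑ i, ‖w.repr x i‖ ^ 2 := by
  rw [← w.repr.inner_map_map x x, PiLp.inner_apply, map_sum]
  congr 1; ext i
  rw [RCLike.inner_apply, RCLike.mul_conj]
  norm_num [← Complex.ofReal_pow]

lemma repr_supp (w : OrthonormalBasis (Fin n) ℂ E) (S : Finset (Fin n)) (x : E)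
    (hx : x ∈ Submodule.span ℂ (w '' ↑S)) (i : Fin n) (hi : i ∉ S) :
    w.repr x i = 0 := by
  have hco : ⇑w = ⇑w.toBasis := by simp
  rw [hco] at hx
  have h2 := (w.toBasis.mem_span_image.mp hx)
  have h3 : w.toBasis.repr x i = w.repr x i := by simp
  by_contra h
  exact hi (h2 (Finsupp.mem_support_iff.mpr (by simpa [h3] using h)))

lemma rayleigh_le (w : OrthonormalBasis (Fin n) ℂ E) (T : E →ₗ[ℂ] E) (μ : Fin n → ℝ)
    (hw : ∀ i, T (w i) = (μ i : ℂ) • w i) (S : Finset (Fin n)) (c : ℝ)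
    (hc : ∀ i ∈ S, μ i ≤ c) (x : E) (hx : x ∈ Submodule.span ℂ (w '' ↑S)) :
    re ⟪x, T x⟫ ≤ c * re ⟪x, x⟫ := by
  rw [inner_T_eq w T μ hw, inner_self_eq' w, Finset.mul_sum]
  refine Finset.sum_le_sum fun i _ => ?_
  by_cases hiS : i ∈ S
  · exact mul_le_mul_of_nonneg_right (hc i hiS) (sq_nonneg _)
  · simp [repr_supp w S x hx i hiS]

lemma rayleigh_ge (w : OrthonormalBasis (Fin n) ℂ E) (T : E →ₗ[ℂ] E) (μ : Fin n → ℝ)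
    (hw : ∀ i, T (w i) = (μ i : ℂ) • w i) (S : Finset (Fin n)) (c : ℝ)
    (hc : ∀ i ∈ S, c ≤ μ i) (x : E) (hx : x ∈ Submodule.span ℂ (w '' ↑S)) :
    c * re ⟪x, x⟫ ≤ re ⟪x, T x⟫ := by
  rw [inner_T_eq w T μ hw, inner_self_eq' w, Finset.mul_sum]
  refine Finset.sum_le_sum fun i _ => ?_
  by_cases hiS : i ∈ S
  · exact mul_le_mul_of_nonneg_right (hc i hiS) (sq_nonneg _)
  · simp [repr_supp w S x hx i hiS]

lemma finrank_span_on {v : Fin n → E} (hv : Orthonormal ℂ v) (S : Finset (Fin n)) :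
    finrank ℂ (Submodule.span ℂ (v '' ↑S)) = S.card := by
  classical
  have hli : LinearIndependent ℂ v := hv.linearIndependent
  have h0 : v '' ↑S = Set.range (fun i : {x // x ∈ S} => v i) := by
    ext y; simp [Set.mem_image]
  have h1 : LinearIndependent ℂ (fun i : {x // x ∈ S} => v i) :=
    hli.comp ((↑) : {x // x ∈ S} → Fin n) Subtype.val_injective
  rw [h0, finrank_span_eq_card h1, Fintype.card_coe]

lemma exists_ne_zero_inf [FiniteDimensional ℂ E] (p q : Submodule ℂ E)
    (h : finrank ℂ E < finrank ℂ p + finrank ℂ q) : ∃ x, x ≠ 0 ∧ x ∈ p ⊓ q := by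
  have h1 := Submodule.finrank_sup_add_finrank_inf_eq p q
  have h2 : finrank ℂ ↥(p ⊔ q) ≤ finrank ℂ E := Submodule.finrank_le _
  have h3 : 0 < finrank ℂ ↥(p ⊓ q) := by omega
  have hne : p ⊓ q ≠ ⊥ := by
    intro hb; rw [hb] at h3; simp at h3
  obtain ⟨x, hx, hx0⟩ := Submodule.exists_mem_ne_zero_of_ne_bot hne
  exact ⟨x, hx0, hx⟩

variable {m : ℕ}

def embLM (m : ℕ) : EuclideanSpace ℂ (Fin (m+1)) →ₗ[ℂ] EuclideanSpace ℂ (Fin (m+2)) where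
  toFun y := (WithLp.equiv 2 _).symm (Fin.snoc (WithLp.equiv 2 _ y) 0)
  map_add' y z := by
    apply PiLp.ext; intro i
    induction i using Fin.lastCases with
    | last => simp [Fin.snoc_last]
    | cast i => simp [Fin.snoc_castSucc]
  map_smul' c y := by
    apply PiLp.ext; intro i
    induction i using Fin.lastCases with
    | last => simp [Fin.snoc_last]
    | cast i => simp [Fin.snoc_castSucc]

@[simp] lemma embLM_castSucc (y : EuclideanSpace ℂ (Fin (m+1))) (i : Fin (m+1)) :
    embLM m y i.castSucc = y i := by simp [embLM, Fin.snoc_castSucc]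

@[simp] lemma embLM_last (y : EuclideanSpace ℂ (Fin (m+1))) :
    embLM m y (Fin.last (m+1)) = 0 := by simp [embLM, Fin.snoc_last]

lemma embLM_inner (y z : EuclideanSpace ℂ (Fin (m+1))) :
    ⟪embLM m y, embLM m z⟫ = ⟪y, z⟫ := by
  rw [PiLp.inner_apply, PiLp.inner_apply, Fin.sum_univ_castSucc]
  simp

def emb (m : ℕ) : EuclideanSpace ℂ (Fin (m+1)) →ₗᵢ[ℂ] EuclideanSpace ℂ (Fin (m+2)) :=
  (embLM m).isometryOfInner embLM_inner

lemma toEuclideanLin_apply' {n : ℕ} (A : Matrix (Fin n) (Fin n) ℂ)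
    (x : EuclideanSpace ℂ (Fin n)) (j : Fin n) :
    Matrix.toEuclideanLin A x j = ∑ k, A j k * x k := by
  rfl

lemma emb_quadform (A : Matrix (Fin (m+2)) (Fin (m+2)) ℂ) (y : EuclideanSpace ℂ (Fin (m+1))) :
    ⟪emb m y, Matrix.toEuclideanLin A (emb m y)⟫
      = ⟪y, Matrix.toEuclideanLin (A.submatrix Fin.castSucc Fin.castSucc) y⟫ := by
  rw [PiLp.inner_apply, PiLp.inner_apply, Fin.sum_univ_castSucc]
  have hlast : (emb m y) (Fin.last (m+1)) = 0 := embLM_last y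
  rw [hlast]
  rw [inner_zero_left, add_zero]
  congr 1; ext i
  have h1 : (emb m y) i.castSucc = y i := embLM_castSucc y i
  rw [h1]
  congr 1
  rw [toEuclideanLin_apply' A, toEuclideanLin_apply' _ y _, Fin.sum_univ_castSucc, hlast]
  simp only [mul_zero, add_zero]
  congr 1; ext k
  rw [show (emb m) y k.castSucc = y k from embLM_castSucc y k]
  rfl

end CauchyAux

end CauchyAux

/-- The eigenvalues of a Hermitian matrix, sorted in increasing order. -/
noncomputable def sortedEigs {n : ℕ} {A : Matrix (Fin n) (Fin n) ℂ}
    (hA : A.IsHermitian) : Fin n → ℝ :=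
  hA.eigenvalues ∘ Tuple.sort hA.eigenvalues

noncomputable section CauchyAux2

local notation "⟪" x ", " y "⟫" => @inner ℂ _ _ x y

namespace CauchyAux

lemma sortedEigs_monotone {n : ℕ} {A : Matrix (Fin n) (Fin n) ℂ} (hA : A.IsHermitian) :
    Monotone (sortedEigs hA) := Tuple.monotone_sort _

noncomputable def sortedBasis {n : ℕ} {A : Matrix (Fin n) (Fin n) ℂ} (hA : A.IsHermitian) :
    OrthonormalBasis (Fin n) ℂ (EuclideanSpace ℂ (Fin n)) :=
  hA.eigenvectorBasis.reindex (Tuple.sort hA.eigenvalues).symm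

lemma sortedBasis_eig {n : ℕ} {A : Matrix (Fin n) (Fin n) ℂ} (hA : A.IsHermitian) (i : Fin n) :
    Matrix.toEuclideanLin A (sortedBasis hA i) = (sortedEigs hA i : ℂ) • sortedBasis hA i := by
  have hw : sortedBasis hA i = hA.eigenvectorBasis (Tuple.sort hA.eigenvalues i) := by
    simp [sortedBasis]
  rw [hw]
  apply PiLp.ext; intro k
  rw [toEuclideanLin_apply']
  have h2 : (∑ l : Fin n, A k l * hA.eigenvectorBasis (Tuple.sort hA.eigenvalues i) l)
      = hA.eigenvalues (Tuple.sort hA.eigenvalues i) •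
          hA.eigenvectorBasis (Tuple.sort hA.eigenvalues i) k := by
    have := congrFun (hA.mulVec_eigenvectorBasis (Tuple.sort hA.eigenvalues i)) k
    simpa only [Matrix.mulVec, dotProduct, Pi.smul_apply] using this
  rw [h2]
  simp [sortedEigs, Complex.real_smul]

end CauchyAux

open CauchyAux in
/-- Cauchy interlacing: the sorted eigenvalues of the principal `(n-1) × (n-1)`
submatrix (deleting the last row and column) of a Hermitian matrix interlace those
of the matrix itself: `λ_j(A) ≤ λ_j'(A') ≤ λ_{j+1}(A)`. -/
theorem cauchy_interlacing (m : ℕ) (A : Matrix (Fin (m+2)) (Fin (m+2)) ℂ)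
    (hA : A.IsHermitian) (j : Fin (m+1)) :
    sortedEigs hA j.castSucc ≤ sortedEigs (hA.submatrix Fin.castSucc) j ∧
      sortedEigs (hA.submatrix Fin.castSucc) j ≤ sortedEigs hA j.succ := by
  classical
  set A' := A.submatrix Fin.castSucc Fin.castSucc with hA'def
  have hA' : A'.IsHermitian := hA.submatrix Fin.castSucc
  set T := Matrix.toEuclideanLin A
  set T' := Matrix.toEuclideanLin A'
  set w := sortedBasis hA
  set u := sortedBasis hA'
  set μ : Fin (m+2) → ℝ := sortedEigs hA
  set μ' : Fin (m+1) → ℝ := sortedEigs hA'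
  have hw : ∀ i, T (w i) = (μ i : ℂ) • w i := sortedBasis_eig hA
  have hu : ∀ i, T' (u i) = (μ' i : ℂ) • u i := sortedBasis_eig hA'
  have hμ : Monotone μ := sortedEigs_monotone hA
  have hμ' : Monotone μ' := sortedEigs_monotone hA'
  have hEdim : finrank ℂ (EuclideanSpace ℂ (Fin (m+2))) = m + 2 := finrank_euclideanSpace_fin
  have key : ∀ (S₁ : Finset (Fin (m+2))) (S₂ : Finset (Fin (m+1))) (c c' : ℝ),
      (m + 2 < S₁.card + S₂.card) →
      (∀ i ∈ S₁, μ i ≤ c) → (∀ i ∈ S₂, c' ≤ μ' i) → c' ≤ c := by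
    intro S₁ S₂ c c' hcard hc hc'
    have hfr1 : finrank ℂ (Submodule.span ℂ (w '' ↑S₁)) = S₁.card :=
      finrank_span_on w.orthonormal S₁
    set q : Submodule ℂ (EuclideanSpace ℂ (Fin (m+2))) :=
      Submodule.map (emb m).toLinearMap (Submodule.span ℂ (u '' ↑S₂)) with hq
    have hfr2 : finrank ℂ q = S₂.card := by
      rw [← finrank_span_on u.orthonormal S₂]
      exact ((Submodule.span ℂ (u '' ↑S₂)).equivMapOfInjective _
        (emb m).injective).finrank_eq.symm
    obtain ⟨x, hx0, hxp, hxq⟩ := exists_ne_zero_inf (Submodule.span ℂ (w '' ↑S₁)) q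
      (by rw [hEdim, hfr1, hfr2]; exact hcard)
    obtain ⟨y, hy, hyx⟩ := Submodule.mem_map.mp hxq
    have hy0 : y ≠ 0 := by
      rintro rfl; exact hx0 (by simpa using hyx.symm)
    have hyy : 0 < re ⟪y, y⟫ := by
      rw [inner_self_eq_norm_sq (𝕜 := ℂ) y]
      exact pow_pos (norm_pos_iff.mpr hy0) 2
    have step1 : c' * re ⟪y, y⟫ ≤ re ⟪y, T' y⟫ := rayleigh_ge u T' μ' hu S₂ c' hc' y hy
    have step2 : re ⟪y, T' y⟫ = re ⟪x, T x⟫ := by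
      rw [← hyx]
      exact congrArg re (emb_quadform A y).symm
    have step3 : re ⟪x, T x⟫ ≤ c * re ⟪x, x⟫ := rayleigh_le w T μ hw S₁ c hc x hxp
    have step4 : re ⟪x, x⟫ = re ⟪y, y⟫ := by
      rw [← hyx]
      exact congrArg re (embLM_inner y y)
    have : c' * re ⟪y, y⟫ ≤ c * re ⟪y, y⟫ := by
      calc c' * re ⟪y, y⟫ ≤ re ⟪y, T' y⟫ := step1
        _ = re ⟪x, T x⟫ := step2
        _ ≤ c * re ⟪x, x⟫ := step3
        _ = c * re ⟪y, y⟫ := by rw [step4]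
    exact le_of_mul_le_mul_right this hyy
  have key2 : ∀ (S₁ : Finset (Fin (m+2))) (S₂ : Finset (Fin (m+1))) (c c' : ℝ),
      (m + 2 < S₁.card + S₂.card) →
      (∀ i ∈ S₁, c' ≤ μ i) → (∀ i ∈ S₂, μ' i ≤ c) → c' ≤ c := by
    intro S₁ S₂ c c' hcard hc' hc
    have hfr1 : finrank ℂ (Submodule.span ℂ (w '' ↑S₁)) = S₁.card :=
      finrank_span_on w.orthonormal S₁
    set q : Submodule ℂ (EuclideanSpace ℂ (Fin (m+2))) :=
      Submodule.map (emb m).toLinearMap (Submodule.span ℂ (u '' ↑S₂)) with hq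
    have hfr2 : finrank ℂ q = S₂.card := by
      rw [← finrank_span_on u.orthonormal S₂]
      exact ((Submodule.span ℂ (u '' ↑S₂)).equivMapOfInjective _
        (emb m).injective).finrank_eq.symm
    obtain ⟨x, hx0, hxp, hxq⟩ := exists_ne_zero_inf (Submodule.span ℂ (w '' ↑S₁)) q
      (by rw [hEdim, hfr1, hfr2]; exact hcard)
    obtain ⟨y, hy, hyx⟩ := Submodule.mem_map.mp hxq
    have hy0 : y ≠ 0 := by
      rintro rfl; exact hx0 (by simpa using hyx.symm)
    have hyy : 0 < re ⟪y, y⟫ := by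
      rw [inner_self_eq_norm_sq (𝕜 := ℂ) y]
      exact pow_pos (norm_pos_iff.mpr hy0) 2
    have step1 : c' * re ⟪x, x⟫ ≤ re ⟪x, T x⟫ := rayleigh_ge w T μ hw S₁ c' hc' x hxp
    have step2 : re ⟪x, T x⟫ = re ⟪y, T' y⟫ := by
      rw [← hyx]
      exact congrArg re (emb_quadform A y)
    have step3 : re ⟪y, T' y⟫ ≤ c * re ⟪y, y⟫ := rayleigh_le u T' μ' hu S₂ c hc y hy
    have step4 : re ⟪x, x⟫ = re ⟪y, y⟫ := by
      rw [← hyx]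
      exact congrArg re (embLM_inner y y)
    have : c' * re ⟪y, y⟫ ≤ c * re ⟪y, y⟫ := by
      calc c' * re ⟪y, y⟫ = c' * re ⟪x, x⟫ := by rw [step4]
        _ ≤ re ⟪x, T x⟫ := step1
        _ = re ⟪y, T' y⟫ := step2
        _ ≤ c * re ⟪y, y⟫ := step3
    exact le_of_mul_le_mul_right this hyy
  constructor
  · -- μ (castSucc j) ≤ μ' j
    refine key2 (Finset.Ici j.castSucc) (Finset.Iic j) (μ' j) (μ j.castSucc) ?_ ?_ ?_
    · rw [Fin.card_Ici, Fin.card_Iic]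
      have := j.isLt
      simp only [Fin.coe_castSucc]
      omega
    · intro i hi
      exact hμ (Finset.mem_Ici.mp hi)
    · intro i hi
      exact hμ' (Finset.mem_Iic.mp hi)
  · -- μ' j ≤ μ (succ j)
    refine key (Finset.Iic j.succ) (Finset.Ici j) (μ j.succ) (μ' j) ?_ ?_ ?_
    · rw [Fin.card_Iic, Fin.card_Ici]
      have := j.isLt
      simp only [Fin.val_succ]
      omega
    · intro i hi
      exact hμ (Finset.mem_Iic.mp hi)
    · intro i hi
      exact hμ' (Finset.mem_Ici.mp hi)

end CauchyAux2
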